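/- arXiv:2109.04286 — 3 statements merged into one kernel-verified Lean document; each statement's English description precedes it below -/
import Mathlib

section
/- Let d, K, m be natural numbers, let C : Fin m → (Fin d × Fin (K+1)) → ℝ be first-layer kernel weights, let h : (Fin m → ℝ) → ℝ be an arbitrary continuation function, and fix a coordinate (i,k) ∈ Fin d × Fin (K+1). Suppose the composite function f = h ∘ L_C is independent of the input coordinate (i,k). Define C' by C' b = Function.update (C b) (i,k) 0 for each b ∈ Fin m. Then C' b (i,k) = 0 for all b, and h ∘ L_{C'} = h ∘ L_C as functions; i.e., f admits a representation in which the weights of all m first-layer kernels at position (i,k) are zero. (This is the inclusion F ⊆ F₀ in the proof of Theorem 1.) -/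
/-- The first 1D-convolution layer: `m` kernels of shape `d × (K+1)`,
each producing the weighted sum of the input entries. -/
def convLayer {d K m : ℕ} (C : Fin m → (Fin d × Fin (K+1)) → ℝ)
    (X : (Fin d × Fin (K+1)) → ℝ) : Fin m → ℝ :=
  fun b => ∑ p : Fin d × Fin (K+1), C b p * X p

/-- If `h ∘ convLayer C` is independent of the input coordinate `ik`, then the
modified weights `C'` (obtained by zeroing every kernel's weight at `ik`)
satisfy `C' b ik = 0` for all `b` and realize the same composite function.
(Inclusion `F ⊆ F₀` in the proof of Theorem 1.) -/
theorem independent_imp_zero_kernel_representation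
    (d K m : ℕ) (C : Fin m → (Fin d × Fin (K+1)) → ℝ)
    (h : (Fin m → ℝ) → ℝ)
    (ik : Fin d × Fin (K+1))
    (hindep : ∀ (X : (Fin d × Fin (K+1)) → ℝ) (v : ℝ),
      (h ∘ convLayer C) (Function.update X ik v) = (h ∘ convLayer C) X) :
    (∀ b : Fin m, (fun b' => Function.update (C b') ik 0) b ik = 0) ∧
      h ∘ convLayer (fun b' => Function.update (C b') ik 0) = h ∘ convLayer C := by
  constructor
  · intro b; simp
  · funext X
    have key : convLayer (fun b' => Function.update (C b') ik 0) X
        = convLayer C (Function.update X ik 0) := by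
      funext b
      unfold convLayer
      apply Finset.sum_congr rfl
      intro p _
      by_cases hp : p = ik
      · subst hp; simp
      · simp [Function.update_of_ne hp]
    simp only [Function.comp_apply, key]
    exact hindep X 0
end

section
/- Theorem 1 (functional form). Let d, K, m be natural numbers, let C : Fin m → (Fin d × Fin (K+1)) → ℝ be first-layer kernel weights, let h : (Fin m → ℝ) → ℝ be an arbitrary continuation function, and fix a coordinate (i,k) ∈ Fin d × Fin (K+1). Then the composite function h ∘ L_C is independent of the input coordinate (i,k) if and only if there exist kernel weights C' : Fin m → (Fin d × Fin (K+1)) → ℝ with C' b (i,k) = 0 for every b ∈ Fin m such that h ∘ L_{C'} = h ∘ L_C. -/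
lemma convLayer_congr {d K m : ℕ} (C C' : Fin m → (Fin d × Fin (K+1)) → ℝ)
    (X X' : (Fin d × Fin (K+1)) → ℝ)
    (H : ∀ b p, C b p * X p = C' b p * X' p) :
    convLayer C X = convLayer C' X' := by
  funext b
  exact Finset.sum_congr rfl fun p _ => H b p

/-- Theorem 1 (functional form): `h ∘ convLayer C` is independent of the input
coordinate `ik` iff it admits a representation whose first-layer kernel
weights at `ik` are all zero. -/
theorem independent_iff_zero_kernel_representation
    (d K m : ℕ) (C : Fin m → (Fin d × Fin (K+1)) → ℝ)
    (h : (Fin m → ℝ) → ℝ)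
    (ik : Fin d × Fin (K+1)) :
    (∀ (X : (Fin d × Fin (K+1)) → ℝ) (v : ℝ),
        (h ∘ convLayer C) (Function.update X ik v) = (h ∘ convLayer C) X)
      ↔ ∃ C' : Fin m → (Fin d × Fin (K+1)) → ℝ,
          (∀ b : Fin m, C' b ik = 0) ∧ h ∘ convLayer C' = h ∘ convLayer C := by
  constructor
  · intro hind
    refine ⟨fun b p => if p = ik then 0 else C b p, fun b => by simp, ?_⟩
    funext X
    have key : convLayer (fun b p => if p = ik then 0 else C b p) X
        = convLayer C (Function.update X ik 0) := by
      apply convLayer_congr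
      intro b p
      by_cases hp : p = ik
      · subst hp; simp
      · simp [hp, Function.update_of_ne hp]
    simp only [Function.comp_apply, key]
    exact hind X 0
  · rintro ⟨C', hz, heq⟩ X v
    rw [← heq]
    simp only [Function.comp_apply]
    congr 1
    apply convLayer_congr
    intro b p
    by_cases hp : p = ik
    · subst hp; simp [hz b]
    · simp [Function.update_of_ne hp]
end

section
/- Theorem 1 (set-equality form). Let d, K, m be natural numbers and fix a coordinate (i,k) ∈ Fin d × Fin (K+1). Let F be the set of functions f : ((Fin d × Fin (K+1)) → ℝ) → ℝ such that there exist kernel weights C : Fin m → (Fin d × Fin (K+1)) → ℝ and a continuation function h : (Fin m → ℝ) → ℝ with f = h ∘ L_C and f independent of the input coordinate (i,k). Let F₀ be the set of functions f such that there exist kernel weights C' with C' b (i,k) = 0 for all b ∈ Fin m and a continuation function h with f = h ∘ L_{C'}. Then F = F₀. -/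
lemma convLayer_zero_update {d K m : ℕ} (ik : Fin d × Fin (K+1))
    (C : Fin m → (Fin d × Fin (K+1)) → ℝ) (hC : ∀ b, C b ik = 0)
    (X : (Fin d × Fin (K+1)) → ℝ) (v : ℝ) :
    convLayer C (Function.update X ik v) = convLayer C X := by
  funext b
  unfold convLayer
  refine Finset.sum_congr rfl fun p _ => ?_
  by_cases hp : p = ik
  · subst hp; simp [hC]
  · rw [Function.update_of_ne hp]

lemma convLayer_updateC {d K m : ℕ} (ik : Fin d × Fin (K+1))
    (C : Fin m → (Fin d × Fin (K+1)) → ℝ)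
    (X : (Fin d × Fin (K+1)) → ℝ) :
    convLayer (fun b => Function.update (C b) ik 0) X
      = convLayer C (Function.update X ik 0) := by
  funext b
  unfold convLayer
  refine Finset.sum_congr rfl fun p _ => ?_
  by_cases hp : p = ik
  · subst hp; simp
  · simp only [Function.update_of_ne hp]

/-- Theorem 1 (set-equality form): the set `F` of first-layer CNNs (with `m`
kernels and continuation `h`) that are independent of the input coordinate
`ik` equals the set `F₀` of first-layer CNNs whose first-layer kernel weights
at `ik` are all zero. -/
theorem independent_CNNs_eq_zero_kernel_CNNs
    (d K m : ℕ) (ik : Fin d × Fin (K+1)) :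
    {f : ((Fin d × Fin (K+1)) → ℝ) → ℝ |
        ∃ (C : Fin m → (Fin d × Fin (K+1)) → ℝ) (h : (Fin m → ℝ) → ℝ),
          f = h ∘ convLayer C ∧
          ∀ (X : (Fin d × Fin (K+1)) → ℝ) (v : ℝ),
            f (Function.update X ik v) = f X}
      = {f : ((Fin d × Fin (K+1)) → ℝ) → ℝ |
          ∃ (C' : Fin m → (Fin d × Fin (K+1)) → ℝ) (h : (Fin m → ℝ) → ℝ),
            (∀ b : Fin m, C' b ik = 0) ∧ f = h ∘ convLayer C'} := by
  ext f
  simp only [Set.mem_setOf_eq]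
  constructor
  · rintro ⟨C, h, rfl, hind⟩
    refine ⟨fun b => Function.update (C b) ik 0, h, fun b => by simp, ?_⟩
    funext X
    have h1 : (h ∘ convLayer C) (Function.update X ik 0) = (h ∘ convLayer C) X :=
      hind X 0
    simp only [Function.comp_apply] at h1 ⊢
    rw [convLayer_updateC ik C X, h1]
  · rintro ⟨C', h, hC, rfl⟩
    exact ⟨C', h, rfl, fun X v => by
      simp only [Function.comp_apply, convLayer_zero_update ik C' hC X v]⟩
end
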